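/- arXiv:1111.3029 — 4 statements merged into one kernel-verified Lean document; each statement's English description precedes it below -/
import Mathlib

section
/- Local quadratic bracketing (Theorem 2 / TapproxLL, deterministic form): Assume condition (L0)(r,δ₀) holds for some δ₀ ≤ δ and that D₊² = (1−δ)D² − ωV² is positive semidefinite. Then for every θ ∈ Θ0(r), L₋(θ,θ*) − err₋(r) ≤ L(θ,θ*) ≤ L₊(θ,θ*) + err₊(r). -/
open MeasureTheory Matrix
open scoped RealInnerProductSpace

/-- Action of a `p × p` real matrix on a vector of `EuclideanSpace ℝ (Fin p)`. -/
noncomputable def mva {p : ℕ} (M : Matrix (Fin p) (Fin p) ℝ)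
    (x : EuclideanSpace ℝ (Fin p)) : EuclideanSpace ℝ (Fin p) :=
  Matrix.toEuclideanLin M x

lemma mva_sq_inner {p : ℕ} (A : Matrix (Fin p) (Fin p) ℝ) (hA : A.IsHermitian)
    (u : EuclideanSpace ℝ (Fin p)) : ⟪u, mva (A * A) u⟫ = ‖mva A u‖ ^ 2 := by
  have h1 : mva (A * A) u = Matrix.toEuclideanLin A (mva A u) := by
    simp [mva, Matrix.toEuclideanLin_apply, Matrix.mulVec_mulVec]
  have h2 : Matrix.toEuclideanLin A = LinearMap.adjoint (Matrix.toEuclideanLin A) := by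
    rw [← Matrix.toEuclideanLin_conjTranspose_eq_adjoint, hA.eq]
  rw [h1, h2, LinearMap.adjoint_inner_right]
  rw [show Matrix.toEuclideanLin A u = mva A u from rfl, real_inner_self_eq_norm_sq]

lemma mva_zero {p : ℕ} (A : Matrix (Fin p) (Fin p) ℝ) : mva A 0 = 0 := by
  simp [mva]

lemma mva_ne_zero {p : ℕ} {A : Matrix (Fin p) (Fin p) ℝ} (hA : A.PosDef)
    {u : EuclideanSpace ℝ (Fin p)} (hu : u ≠ 0) : mva A u ≠ 0 := by
  intro h
  have h2 : ⟪u, mva A u⟫ = 0 := by rw [h, inner_zero_right]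
  have h3 : (0:ℝ) < ⟪u, mva A u⟫ := by
    have := hA.dotProduct_mulVec_pos (x := WithLp.equiv 2 _ u) (by simpa using hu)
    simpa [mva, Matrix.toEuclideanLin_apply, EuclideanSpace.inner_eq_star_dotProduct,
      dotProduct_comm] using this
  linarith

lemma mva_comb {p : ℕ} (M N : Matrix (Fin p) (Fin p) ℝ) (a b : ℝ)
    (u : EuclideanSpace ℝ (Fin p)) :
    ⟪u, mva (a • M + b • N) u⟫ = a * ⟪u, mva M u⟫ + b * ⟪u, mva N u⟫ := by
  simp [mva, map_add, _root_.map_smul, inner_add_right, inner_smul_right]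

/-- **Local quadratic bracketing** (Theorem `TapproxLL`, deterministic form).
Under condition `(L0)(r, δ₀)` with `δ₀ ≤ δ` and `D₊² = (1-δ)D² - ωV² ⪰ 0`, for every
`θ ∈ Θ₀(r)` one has `L₋(θ,θ*) - err₋(r) ≤ L(θ,θ*) ≤ L₊(θ,θ*) + err₊(r)`. -/
theorem local_quadratic_bracketing
    {p : ℕ} {Ω : Type*} [MeasurableSpace Ω] (P : Measure Ω) [IsProbabilityMeasure P]
    (Θ : Set (EuclideanSpace ℝ (Fin p))) (θstar : EuclideanSpace ℝ (Fin p))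
    (hθstar : θstar ∈ Θ)
    (L : Ω → EuclideanSpace ℝ (Fin p) → ℝ)
    (EL : EuclideanSpace ℝ (Fin p) → ℝ)
    (hEL : ∀ θ, EL θ = ∫ w, L w θ ∂P)
    (hELmax : ∀ θ ∈ Θ, EL θ ≤ EL θstar)
    (hELgrad : HasGradientAt EL 0 θstar)
    (gradL : Ω → EuclideanSpace ℝ (Fin p))
    (hgradL : ∀ w, HasGradientAt (L w) (gradL w) θstar)
    (V D Dp Dm : Matrix (Fin p) (Fin p) ℝ)
    (hV : V.PosDef) (hD : D.PosDef)
    (r δ δ₀ ω : ℝ) (hr : 0 < r) (hδ : 0 ≤ δ) (hδ1 : δ < 1) (hω : 0 ≤ ω)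
    (hδ₀ : δ₀ ≤ δ)
    -- condition (L0)(r, δ₀)
    (hL0 : ∀ θ ∈ Θ, ‖mva V (θ - θstar)‖ ≤ r → θ ≠ θstar →
      |(-(2 * (EL θ - EL θstar))) / ‖mva D (θ - θstar)‖ ^ 2 - 1| ≤ δ₀)
    -- D₊ is the (symmetric psd) square root of D₊² := (1-δ)D² - ωV² ⪰ 0,
    -- D₋ that of D₋² := (1+δ)D² + ωV²
    (hDp : Dp.PosSemidef) (hDp2 : Dp * Dp = (1 - δ) • (D * D) - ω • (V * V))
    (hDm : Dm.PosSemidef) (hDm2 : Dm * Dm = (1 + δ) • (D * D) + ω • (V * V))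
    -- the bracketing errors err₊(r), err₋(r)
    (errp errm : Ω → ℝ)
    (herrp : ∀ w, IsLUB ((fun θ => (L w θ - EL θ) - (L w θstar - EL θstar)
        - ⟪θ - θstar, gradL w⟫ - ω / 2 * ‖mva V (θ - θstar)‖ ^ 2) ''
        {θ ∈ Θ | ‖mva V (θ - θstar)‖ ≤ r}) (errp w))
    (herrm : ∀ w, IsLUB ((fun θ => -((L w θ - EL θ) - (L w θstar - EL θstar))
        + ⟪θ - θstar, gradL w⟫ - ω / 2 * ‖mva V (θ - θstar)‖ ^ 2) ''
        {θ ∈ Θ | ‖mva V (θ - θstar)‖ ≤ r}) (errm w)) :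
    ∀ w, ∀ θ ∈ Θ, ‖mva V (θ - θstar)‖ ≤ r →
      (⟪θ - θstar, gradL w⟫ - ‖mva Dm (θ - θstar)‖ ^ 2 / 2) - errm w
          ≤ L w θ - L w θstar ∧
        L w θ - L w θstar
          ≤ (⟪θ - θstar, gradL w⟫ - ‖mva Dp (θ - θstar)‖ ^ 2 / 2) + errp w := by
  intro w θ hθ hθr
  set u := θ - θstar with hu
  have hmem : θ ∈ {θ ∈ Θ | ‖mva V (θ - θstar)‖ ≤ r} := ⟨hθ, hθr⟩
  -- bounds from the LUB property
  have hp : (L w θ - EL θ) - (L w θstar - EL θstar)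
      - ⟪u, gradL w⟫ - ω / 2 * ‖mva V u‖ ^ 2 ≤ errp w :=
    (herrp w).1 (Set.mem_image_of_mem _ hmem)
  have hm : -((L w θ - EL θ) - (L w θstar - EL θstar))
      + ⟪u, gradL w⟫ - ω / 2 * ‖mva V u‖ ^ 2 ≤ errm w :=
    (herrm w).1 (Set.mem_image_of_mem _ hmem)
  -- norm identities for Dp, Dm
  have hDpn : ‖mva Dp u‖ ^ 2 = (1 - δ) * ‖mva D u‖ ^ 2 - ω * ‖mva V u‖ ^ 2 := by
    have := mva_sq_inner Dp hDp.1 u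
    rw [hDp2, sub_eq_add_neg, ← neg_smul] at this
    rw [mva_comb] at this
    rw [← this, mva_sq_inner D hD.1 u, mva_sq_inner V hV.1 u]
    ring
  have hDmn : ‖mva Dm u‖ ^ 2 = (1 + δ) * ‖mva D u‖ ^ 2 + ω * ‖mva V u‖ ^ 2 := by
    have := mva_sq_inner Dm hDm.1 u
    rw [hDm2, mva_comb] at this
    rw [← this, mva_sq_inner D hD.1 u, mva_sq_inner V hV.1 u]
  -- bounds on EL θ - EL θstar
  have hELb : -(1 + δ) * ‖mva D u‖ ^ 2 / 2 ≤ EL θ - EL θstar ∧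
      EL θ - EL θstar ≤ -(1 - δ) * ‖mva D u‖ ^ 2 / 2 := by
    by_cases hθe : θ = θstar
    · subst hθe
      simp [hu, mva_zero]
    · have ht : (0:ℝ) < ‖mva D u‖ ^ 2 := by
        have h := mva_ne_zero hD (u := u) (by simpa [hu, sub_eq_zero] using hθe)
        exact pow_pos (norm_pos_iff.mpr h) 2
      have h0 := hL0 θ hθ hθr hθe
      rw [abs_le] at h0
      have h1 : 1 - δ ≤ -(2 * (EL θ - EL θstar)) / ‖mva D u‖ ^ 2 := by
        have := le_trans (by linarith : -δ ≤ -δ₀) h0.1; linarith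
      have h2 : -(2 * (EL θ - EL θstar)) / ‖mva D u‖ ^ 2 ≤ 1 + δ := by
        have := le_trans h0.2 hδ₀; linarith
      rw [div_le_iff₀ ht] at h2
      rw [le_div_iff₀ ht] at h1
      constructor <;> nlinarith
  have hLdec : L w θ - L w θstar
      = (EL θ - EL θstar) + ((L w θ - EL θ) - (L w θstar - EL θstar)) := by ring
  constructor
  · rw [hLdec]; nlinarith [hELb.1]
  · rw [hLdec]; nlinarith [hELb.2]
end

section
/- Comparison of the shrunk and stretched information matrices (Lemma Lxivgap): Let D², V² be symmetric positive definite p×p matrices with a²D² ≥ V² in the positive semidefinite order for some a > 0. Let δ, ω ≥ 0 with τ := δ + ωa² < 1, and set D₊² := (1−δ)D² − ωV², D₋² := (1+δ)D² + ωV². Then D₊² ≥ (1−τ)D² (in particular D₊² is positive definite), D₋² ≤ (1+τ)D², and ‖I_p − D₊D₋^{-2}D₊‖_op ≤ α := 2τ/(1−τ²). Moreover, for every vector ∇ ∈ ℝ^p, setting ξ := D^{-1}∇, ξ₊ := D₊^{-1}∇, ξ₋ := D₋^{-1}∇, one has ‖ξ₊‖² − ‖ξ‖² ≤ (τ/(1−τ))‖ξ‖²,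 ‖ξ‖² − ‖ξ₋‖² ≤ (τ/(1+τ))‖ξ‖², and ‖ξ₊‖² − ‖ξ₋‖² ≤ α‖ξ‖². -/
open MeasureTheory Matrix
open scoped RealInnerProductSpace

set_option linter.unusedSectionVars false

namespace ShrunkAux

variable {n : Type*} [Fintype n] [DecidableEq n]

lemma herm_shift {S : Matrix n n ℝ} (hS : S.IsHermitian) (x y : n → ℝ) :
    (S *ᵥ x) ⬝ᵥ y = x ⬝ᵥ (S *ᵥ y) := by
  have hSt : Sᵀ = S := by
    rw [← Matrix.conjTranspose_eq_transpose_of_trivial]; exact hS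
  conv_lhs => rw [← hSt]
  rw [Matrix.mulVec_transpose, ← Matrix.dotProduct_mulVec]

lemma psd_nonneg {M : Matrix n n ℝ} (hM : M.PosSemidef) (x : n → ℝ) :
    0 ≤ x ⬝ᵥ M *ᵥ x := by simpa using hM.dotProduct_mulVec_nonneg x

open scoped MatrixOrder in
lemma qf_cs {M : Matrix n n ℝ} (hM : M.PosSemidef) (x y : n → ℝ) :
    (x ⬝ᵥ M *ᵥ y) ^ 2 ≤ (x ⬝ᵥ M *ᵥ x) * (y ⬝ᵥ M *ᵥ y) := by
  have key : ∀ u v : n → ℝ, u ⬝ᵥ M *ᵥ v = (CFC.sqrt M *ᵥ u) ⬝ᵥ (CFC.sqrt M *ᵥ v) := by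
    intro u v
    have h := herm_shift (CFC.sqrt_nonneg M).posSemidef.1 u (CFC.sqrt M *ᵥ v)
    rw [Matrix.mulVec_mulVec, CFC.sqrt_mul_sqrt_self M hM.nonneg] at h
    exact h.symm
  rw [key x y, key x x, key y y]
  have h2 := Finset.sum_mul_sq_le_sq_mul_sq Finset.univ (CFC.sqrt M *ᵥ x) (CFC.sqrt M *ᵥ y)
  simpa only [dotProduct, pow_two] using h2

lemma inv_qf_le {A B : Matrix n n ℝ} (hA : A.PosDef) (hB : B.PosDef)
    (hAB : (B - A).PosSemidef) (x : n → ℝ) :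
    x ⬝ᵥ B⁻¹ *ᵥ x ≤ x ⬝ᵥ A⁻¹ *ᵥ x := by
  have hAd : IsUnit A.det := hA.det_pos.ne'.isUnit
  have hBd : IsUnit B.det := hB.det_pos.ne'.isUnit
  set u := B⁻¹ *ᵥ x with hu
  have h1 : (A⁻¹ *ᵥ x) ⬝ᵥ (A *ᵥ u) = x ⬝ᵥ B⁻¹ *ᵥ x := by
    rw [herm_shift hA.inv.1, Matrix.mulVec_mulVec, Matrix.nonsing_inv_mul A hAd,
      Matrix.one_mulVec]
  have h2 : (A⁻¹ *ᵥ x) ⬝ᵥ (A *ᵥ (A⁻¹ *ᵥ x)) = x ⬝ᵥ A⁻¹ *ᵥ x := by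
    rw [herm_shift hA.inv.1, Matrix.mulVec_mulVec, Matrix.nonsing_inv_mul A hAd,
      Matrix.one_mulVec]
  have h4 : u ⬝ᵥ (B *ᵥ u) = x ⬝ᵥ B⁻¹ *ᵥ x := by
    rw [hu, herm_shift hB.inv.1, Matrix.mulVec_mulVec, Matrix.nonsing_inv_mul B hBd,
      Matrix.one_mulVec]
  have h3 : u ⬝ᵥ (A *ᵥ u) ≤ x ⬝ᵥ B⁻¹ *ᵥ x := by
    have h5 := psd_nonneg hAB u
    rw [Matrix.sub_mulVec, dotProduct_sub] at h5
    linarith [h4]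
  have cs := qf_cs hA.posSemidef (A⁻¹ *ᵥ x) u
  rw [h1, h2] at cs
  have hBx := psd_nonneg hB.inv.posSemidef x
  have hAx := psd_nonneg hA.inv.posSemidef x
  nlinarith [cs, h3, hBx, hAx]

lemma posDef_of_sq {M A : Matrix n n ℝ} (hM : M.PosSemidef) (hA : A.PosDef)
    (h : M * M = A) : M.PosDef := by
  refine PosDef.of_dotProduct_mulVec_pos hM.1 (fun x hx => ?_)
  rcases lt_or_eq_of_le (hM.dotProduct_mulVec_nonneg x) with h' | h'
  · exact h'
  · exfalso
    have h0 : M *ᵥ x = 0 := (hM.dotProduct_mulVec_zero_iff x).mp h'.symm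
    have hA0 : A *ᵥ x = 0 := by
      rw [← h, ← Matrix.mulVec_mulVec, h0, Matrix.mulVec_zero]
    have := hA.dotProduct_mulVec_pos hx
    rw [hA0, dotProduct_zero] at this
    exact lt_irrefl 0 this

lemma psd_smul {c : ℝ} (hc : 0 ≤ c) {A : Matrix n n ℝ} (hA : A.PosSemidef) :
    (c • A).PosSemidef := by
  refine PosSemidef.of_dotProduct_mulVec_nonneg ?_ (fun x => ?_)
  · show (c • A)ᴴ = c • A
    rw [Matrix.conjTranspose_smul, hA.1.eq, star_trivial]
  · rw [Matrix.smul_mulVec, dotProduct_smul, smul_eq_mul]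
    exact mul_nonneg hc (hA.dotProduct_mulVec_nonneg x)

lemma pd_smul {c : ℝ} (hc : 0 < c) {A : Matrix n n ℝ} (hA : A.PosDef) :
    (c • A).PosDef := by
  refine PosDef.of_dotProduct_mulVec_pos ?_ (fun x hx => ?_)
  · show (c • A)ᴴ = c • A
    rw [Matrix.conjTranspose_smul, hA.1.eq, star_trivial]
  · rw [Matrix.smul_mulVec, dotProduct_smul, smul_eq_mul]
    exact mul_pos hc (hA.dotProduct_mulVec_pos hx)

lemma smul_inv_pd {c : ℝ} (hc : 0 < c) {A : Matrix n n ℝ} (hA : A.PosDef) :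
    (c • A)⁻¹ = c⁻¹ • A⁻¹ := by
  apply Matrix.inv_eq_right_inv
  rw [Matrix.smul_mul, Matrix.mul_smul, smul_smul,
    Matrix.mul_nonsing_inv A hA.det_pos.ne'.isUnit, mul_inv_cancel₀ hc.ne', one_smul]

lemma esp_norm_sq {p : ℕ} (v : EuclideanSpace ℝ (Fin p)) :
    ‖v‖ ^ 2 = (WithLp.equiv 2 (Fin p → ℝ) v) ⬝ᵥ (WithLp.equiv 2 (Fin p → ℝ) v) := by
  rw [← real_inner_self_eq_norm_sq]
  simp [PiLp.inner_apply, dotProduct, RCLike.inner_apply]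
  rw [EuclideanSpace.real_norm_sq_eq]; simp [sq]

lemma aux1 {α t s c d : ℝ} (hα : 0 ≤ α) (ht : 0 ≤ t) (hs : 0 ≤ s)
    (hd0 : 0 ≤ d) (hcs : t ^ 2 ≤ c * d) (hc : c ≤ α * t) (hd : d ≤ α * s) :
    t ≤ α ^ 2 * s := by
  have h := mul_le_mul hc hd hd0 (mul_nonneg hα ht)
  rcases ht.eq_or_lt with h0 | h0
  · rw [← h0]
    positivity
  · have h2 : t ^ 2 ≤ α ^ 2 * s * t := by nlinarith [h, hcs]
    nlinarith [h2, h0]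

lemma aux2 {a b : ℝ} (ha : 0 ≤ a) (hb : 0 ≤ b) (h : a ^ 2 ≤ b ^ 2) : a ≤ b := by
  nlinarith [ha, hb, h]

end ShrunkAux

open ShrunkAux

/-- **Comparison of the shrunk and stretched information matrices** (Lemma `Lxivgap`).
With `τ := δ + ωa² < 1`, `D₊² := (1-δ)D² - ωV²`, `D₋² := (1+δ)D² + ωV²`:
`D₊² ⪰ (1-τ)D²` (so `D₊²` is positive definite), `D₋² ⪯ (1+τ)D²`,
`‖I - D₊D₋⁻²D₊‖ ≤ α := 2τ/(1-τ²)`, and the norms of `ξ = D⁻¹∇`, `ξ₊ = D₊⁻¹∇`,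
`ξ₋ = D₋⁻¹∇` compare as stated. -/
theorem shrunk_stretched_matrix_comparison
    {p : ℕ}
    (D2 V2 D Dp Dm : Matrix (Fin p) (Fin p) ℝ)
    (hD2 : D2.PosDef) (hV2 : V2.PosDef)
    (a : ℝ) (ha : 0 < a) (haDV : (a ^ 2 • D2 - V2).PosSemidef)
    (δ ω : ℝ) (hδ : 0 ≤ δ) (hω : 0 ≤ ω) (hτ : δ + ω * a ^ 2 < 1)
    -- `D`, `D₊`, `D₋` are the symmetric psd square roots of `D²`, `D₊²`, `D₋²`
    (hD : D.PosSemidef) (hDsq : D * D = D2)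
    (hDp : Dp.PosSemidef) (hDpsq : Dp * Dp = (1 - δ) • D2 - ω • V2)
    (hDm : Dm.PosSemidef) (hDmsq : Dm * Dm = (1 + δ) • D2 + ω • V2)
    (grad : EuclideanSpace ℝ (Fin p)) :
    ((1 - δ) • D2 - ω • V2 - (1 - (δ + ω * a ^ 2)) • D2).PosSemidef
    ∧ ((1 - δ) • D2 - ω • V2).PosDef
    ∧ ((1 + (δ + ω * a ^ 2)) • D2 - ((1 + δ) • D2 + ω • V2)).PosSemidef
    ∧ ‖Matrix.toEuclideanCLM (𝕜 := ℝ) (n := Fin p) (1 - Dp * (Dm⁻¹ * Dm⁻¹) * Dp)‖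
        ≤ 2 * (δ + ω * a ^ 2) / (1 - (δ + ω * a ^ 2) ^ 2)
    ∧ ‖mva Dp⁻¹ grad‖ ^ 2 - ‖mva D⁻¹ grad‖ ^ 2
        ≤ (δ + ω * a ^ 2) / (1 - (δ + ω * a ^ 2)) * ‖mva D⁻¹ grad‖ ^ 2
    ∧ ‖mva D⁻¹ grad‖ ^ 2 - ‖mva Dm⁻¹ grad‖ ^ 2
        ≤ (δ + ω * a ^ 2) / (1 + (δ + ω * a ^ 2)) * ‖mva D⁻¹ grad‖ ^ 2
    ∧ ‖mva Dp⁻¹ grad‖ ^ 2 - ‖mva Dm⁻¹ grad‖ ^ 2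
        ≤ 2 * (δ + ω * a ^ 2) / (1 - (δ + ω * a ^ 2) ^ 2) * ‖mva D⁻¹ grad‖ ^ 2 := by
  set τ : ℝ := δ + ω * a ^ 2 with hτdef
  have hτ0 : 0 ≤ τ := add_nonneg hδ (mul_nonneg hω (by positivity))
  have h1m : (0:ℝ) < 1 - τ := by linarith
  have h1p : (0:ℝ) < 1 + τ := by linarith
  have h1sq : (0:ℝ) < 1 - τ ^ 2 := by nlinarith
  have hpsd_gap : (ω • (a ^ 2 • D2 - V2)).PosSemidef := psd_smul hω haDV
  -- part 1
  have part1 : ((1 - δ) • D2 - ω • V2 - (1 - τ) • D2).PosSemidef := by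
    have hid : (1 - δ) • D2 - ω • V2 - (1 - τ) • D2 = ω • (a ^ 2 • D2 - V2) := by
      rw [hτdef]; module
    rw [hid]; exact hpsd_gap
  -- part 2
  have hDp2 : ((1 - δ) • D2 - ω • V2).PosDef := by
    have hid : (1 - δ) • D2 - ω • V2 = (1 - τ) • D2 + ω • (a ^ 2 • D2 - V2) := by
      rw [hτdef]; module
    rw [hid]; exact (pd_smul h1m hD2).add_posSemidef hpsd_gap
  -- part 3
  have part3 : ((1 + τ) • D2 - ((1 + δ) • D2 + ω • V2)).PosSemidef := by
    have hid : (1 + τ) • D2 - ((1 + δ) • D2 + ω • V2) = ω • (a ^ 2 • D2 - V2) := by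
      rw [hτdef]; module
    rw [hid]; exact hpsd_gap
  have hDm2 : ((1 + δ) • D2 + ω • V2).PosDef :=
    (pd_smul (by linarith) hD2).add_posSemidef (psd_smul hω hV2.posSemidef)
  have hDpd : D.PosDef := posDef_of_sq hD hD2 hDsq
  have hDppd : Dp.PosDef := posDef_of_sq hDp hDp2 hDpsq
  have hDmpd : Dm.PosDef := posDef_of_sq hDm hDm2 hDmsq
  -- the three quadratic-form comparison facts
  have hA1 : ((1 - τ) • D2).PosDef := pd_smul h1m hD2
  have hA2 : ((1 + τ) • D2).PosDef := pd_smul h1p hD2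
  have e1 : ((1 - τ) • D2)⁻¹ = (1 - τ)⁻¹ • D2⁻¹ := smul_inv_pd h1m hD2
  have e2 : ((1 + τ) • D2)⁻¹ = (1 + τ)⁻¹ • D2⁻¹ := smul_inv_pd h1p hD2
  have keyP : ∀ x : Fin p → ℝ,
      x ⬝ᵥ ((1 - δ) • D2 - ω • V2)⁻¹ *ᵥ x ≤ (1 - τ)⁻¹ * (x ⬝ᵥ D2⁻¹ *ᵥ x) := by
    intro x
    have h := inv_qf_le hA1 hDp2 part1 x
    rwa [e1, Matrix.smul_mulVec, dotProduct_smul, smul_eq_mul] at h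
  have keyM : ∀ x : Fin p → ℝ,
      (1 + τ)⁻¹ * (x ⬝ᵥ D2⁻¹ *ᵥ x) ≤ x ⬝ᵥ ((1 + δ) • D2 + ω • V2)⁻¹ *ᵥ x := by
    intro x
    have h := inv_qf_le hDm2 hA2 part3 x
    rwa [e2, Matrix.smul_mulVec, dotProduct_smul, smul_eq_mul] at h
  have key0 : ∀ x : Fin p → ℝ,
      x ⬝ᵥ ((1 + δ) • D2 + ω • V2)⁻¹ *ᵥ x ≤ x ⬝ᵥ ((1 - δ) • D2 - ω • V2)⁻¹ *ᵥ x := by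
    intro x
    refine inv_qf_le hDp2 hDm2 ?_ x
    have hid : ((1 + δ) • D2 + ω • V2) - ((1 - δ) • D2 - ω • V2)
        = (2 * δ) • D2 + (2 * ω) • V2 := by module
    rw [hid]
    exact (psd_smul (by linarith) hD2.posSemidef).add (psd_smul (by linarith) hV2.posSemidef)
  -- norms of mva
  set g : Fin p → ℝ := (WithLp.equiv 2 (Fin p → ℝ)) grad with hg
  have hnorm : ∀ M : Matrix (Fin p) (Fin p) ℝ, M.PosDef →
      ‖mva M⁻¹ grad‖ ^ 2 = g ⬝ᵥ (M * M)⁻¹ *ᵥ g := by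
    intro M hM
    have h1 : ‖mva M⁻¹ grad‖ ^ 2 = (M⁻¹ *ᵥ g) ⬝ᵥ (M⁻¹ *ᵥ g) := by
      rw [esp_norm_sq (mva M⁻¹ grad)]
      simp only [mva, WithLp.equiv_apply, Matrix.piLp_ofLp_toEuclideanLin, Matrix.toLin'_apply]
      rfl
    rw [h1, herm_shift hM.inv.1, Matrix.mulVec_mulVec, ← Matrix.mul_inv_rev]
  have hnq : ‖mva D⁻¹ grad‖ ^ 2 = g ⬝ᵥ D2⁻¹ *ᵥ g := by rw [hnorm D hDpd, hDsq]
  have hnqp : ‖mva Dp⁻¹ grad‖ ^ 2 = g ⬝ᵥ ((1 - δ) • D2 - ω • V2)⁻¹ *ᵥ g := by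
    rw [hnorm Dp hDppd, hDpsq]
  have hnqm : ‖mva Dm⁻¹ grad‖ ^ 2 = g ⬝ᵥ ((1 + δ) • D2 + ω • V2)⁻¹ *ᵥ g := by
    rw [hnorm Dm hDmpd, hDmsq]
  have hq0 : 0 ≤ g ⬝ᵥ D2⁻¹ *ᵥ g := psd_nonneg hD2.inv.posSemidef g
  -- part 4 : operator norm bound
  have part4 : ‖Matrix.toEuclideanCLM (𝕜 := ℝ) (n := Fin p) (1 - Dp * (Dm⁻¹ * Dm⁻¹) * Dp)‖
      ≤ 2 * τ / (1 - τ ^ 2) := by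
    set T : Matrix (Fin p) (Fin p) ℝ := 1 - Dp * (Dm⁻¹ * Dm⁻¹) * Dp with hT
    have hMm : Dm⁻¹ * Dm⁻¹ = ((1 + δ) • D2 + ω • V2)⁻¹ := by
      rw [← Matrix.mul_inv_rev, hDmsq]
    have hDpu : IsUnit Dp.det := hDppd.det_pos.ne'.isUnit
    have hDpId : Dp * ((1 - δ) • D2 - ω • V2)⁻¹ * Dp = 1 := by
      rw [← hDpsq, Matrix.mul_inv_rev, ← Matrix.mul_assoc,
        Matrix.mul_nonsing_inv Dp hDpu, Matrix.one_mul, Matrix.nonsing_inv_mul Dp hDpu]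
    have hconv : ∀ (M : Matrix (Fin p) (Fin p) ℝ) (x : Fin p → ℝ),
        (Dp *ᵥ x) ⬝ᵥ (M *ᵥ (Dp *ᵥ x)) = x ⬝ᵥ (Dp * M * Dp) *ᵥ x := by
      intro M x
      rw [herm_shift hDp.1, Matrix.mulVec_mulVec, Matrix.mulVec_mulVec]
    have hqT : ∀ x : Fin p → ℝ,
        x ⬝ᵥ T *ᵥ x = x ⬝ᵥ x - (Dp *ᵥ x) ⬝ᵥ (((1 + δ) • D2 + ω • V2)⁻¹ *ᵥ (Dp *ᵥ x)) := by
      intro x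
      rw [hT, hMm, Matrix.sub_mulVec, dotProduct_sub, Matrix.one_mulVec, hconv]
    -- the identity (Dp x)ᵀ (Dp²)⁻¹ (Dp x) = xᵀx
    have hid1 : ∀ x : Fin p → ℝ,
        (Dp *ᵥ x) ⬝ᵥ (((1 - δ) • D2 - ω • V2)⁻¹ *ᵥ (Dp *ᵥ x)) = x ⬝ᵥ x := by
      intro x
      rw [hconv, hDpId, Matrix.one_mulVec]
    have hTlb : ∀ x : Fin p → ℝ, 0 ≤ x ⬝ᵥ T *ᵥ x := by
      intro x
      rw [hqT x]
      have := key0 (Dp *ᵥ x)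
      have h2 := hid1 x
      linarith [this, h2]
    have hTub : ∀ x : Fin p → ℝ, x ⬝ᵥ T *ᵥ x ≤ 2 * τ / (1 - τ ^ 2) * (x ⬝ᵥ x) := by
      intro x
      rw [hqT x]
      set y := Dp *ᵥ x with hy
      have hP := keyP y
      have hM := keyM y
      have hidy := hid1 x
      have hs : 0 ≤ x ⬝ᵥ x := Finset.sum_nonneg fun i _ => mul_self_nonneg _
      -- (1-τ) * s ≤ d
      have hd : (1 - τ) * (x ⬝ᵥ x) ≤ y ⬝ᵥ D2⁻¹ *ᵥ y := by
        have h6 := mul_le_mul_of_nonneg_left hP h1m.le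
        have heq : (1 - τ) * ((1 - τ)⁻¹ * (y ⬝ᵥ D2⁻¹ *ᵥ y)) = y ⬝ᵥ D2⁻¹ *ᵥ y := by
          field_simp
        rw [heq] at h6
        calc (1 - τ) * (x ⬝ᵥ x) = (1 - τ) * (y ⬝ᵥ ((1 - δ) • D2 - ω • V2)⁻¹ *ᵥ y) := by
              rw [hidy]
          _ ≤ y ⬝ᵥ D2⁻¹ *ᵥ y := h6
      -- d ≤ (1+τ) * m
      have hm2 : y ⬝ᵥ D2⁻¹ *ᵥ y ≤ (1 + τ) * (y ⬝ᵥ ((1 + δ) • D2 + ω • V2)⁻¹ *ᵥ y) := by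
        have h6 := mul_le_mul_of_nonneg_left hM h1p.le
        have heq : (1 + τ) * ((1 + τ)⁻¹ * (y ⬝ᵥ D2⁻¹ *ᵥ y)) = y ⬝ᵥ D2⁻¹ *ᵥ y := by
          field_simp
        rw [heq] at h6
        exact h6
      rw [div_mul_eq_mul_div, le_div_iff₀ h1sq]
      nlinarith [hd, hm2, hs, mul_le_mul_of_nonneg_left (hd.trans hm2) h1m.le,
        mul_nonneg (mul_nonneg hτ0 hτ0) hs, mul_nonneg hτ0 hs]
    have hThm : T.IsHermitian := by
      show Tᴴ = T
      rw [hT]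
      simp only [Matrix.conjTranspose_sub, Matrix.conjTranspose_one, Matrix.conjTranspose_mul,
        hDp.1.eq, hDmpd.inv.1.eq, Matrix.mul_assoc]
    have hTpsd : T.PosSemidef := PosSemidef.of_dotProduct_mulVec_nonneg hThm fun x => by simpa using hTlb x
    have hα0 : 0 ≤ 2 * τ / (1 - τ ^ 2) := div_nonneg (by linarith) h1sq.le
    refine ContinuousLinearMap.opNorm_le_bound _ hα0 fun v => ?_
    set w : Fin p → ℝ := (WithLp.equiv 2 (Fin p → ℝ)) v with hw
    have happ : Matrix.toEuclideanCLM (𝕜 := ℝ) (n := Fin p) T v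
        = (WithLp.equiv 2 (Fin p → ℝ)).symm (T *ᵥ w) := by
      conv_lhs => rw [← (WithLp.equiv 2 (Fin p → ℝ)).symm_apply_apply v]
      rw [WithLp.equiv_symm_apply, Matrix.toEuclideanCLM_toLp]
    have hnormv : ‖v‖ ^ 2 = w ⬝ᵥ w := esp_norm_sq v
    have hnormTv : ‖Matrix.toEuclideanCLM (𝕜 := ℝ) (n := Fin p) T v‖ ^ 2
        = (T *ᵥ w) ⬝ᵥ (T *ᵥ w) := by
      rw [happ, esp_norm_sq]
      simp
    have cs := qf_cs hTpsd (T *ᵥ w) w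
    have hub1 := hTub (T *ᵥ w)
    have hub2 := hTub w
    have hlb1 := hTlb (T *ᵥ w)
    have hlb2 := hTlb w
    have ht : 0 ≤ (T *ᵥ w) ⬝ᵥ (T *ᵥ w) := Finset.sum_nonneg fun i _ => mul_self_nonneg _
    have hsw : 0 ≤ w ⬝ᵥ w := Finset.sum_nonneg fun i _ => mul_self_nonneg _
    have hkey : (T *ᵥ w) ⬝ᵥ (T *ᵥ w)
        ≤ (2 * τ / (1 - τ ^ 2)) ^ 2 * (w ⬝ᵥ w) :=
      aux1 hα0 ht hsw hlb2 cs hub1 hub2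
    have hfin : ‖Matrix.toEuclideanCLM (𝕜 := ℝ) (n := Fin p) T v‖ ^ 2
        ≤ (2 * τ / (1 - τ ^ 2) * ‖v‖) ^ 2 := by
      rw [hnormTv, mul_pow, hnormv]
      exact hkey
    exact aux2 (norm_nonneg _) (mul_nonneg hα0 (norm_nonneg v)) hfin
  -- parts 5,6,7
  have keyPg := keyP g
  have keyMg := keyM g
  have part5 : ‖mva Dp⁻¹ grad‖ ^ 2 - ‖mva D⁻¹ grad‖ ^ 2
      ≤ τ / (1 - τ) * ‖mva D⁻¹ grad‖ ^ 2 := by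
    rw [hnqp, hnq]
    have heq : (1 - τ)⁻¹ * (g ⬝ᵥ D2⁻¹ *ᵥ g) - g ⬝ᵥ D2⁻¹ *ᵥ g
        = τ / (1 - τ) * (g ⬝ᵥ D2⁻¹ *ᵥ g) := by
      field_simp
      ring
    linarith [keyPg, heq]
  have part6 : ‖mva D⁻¹ grad‖ ^ 2 - ‖mva Dm⁻¹ grad‖ ^ 2
      ≤ τ / (1 + τ) * ‖mva D⁻¹ grad‖ ^ 2 := by
    rw [hnqm, hnq]
    have heq : g ⬝ᵥ D2⁻¹ *ᵥ g - (1 + τ)⁻¹ * (g ⬝ᵥ D2⁻¹ *ᵥ g)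
        = τ / (1 + τ) * (g ⬝ᵥ D2⁻¹ *ᵥ g) := by
      field_simp
      ring
    linarith [keyMg, heq]
  have part7 : ‖mva Dp⁻¹ grad‖ ^ 2 - ‖mva Dm⁻¹ grad‖ ^ 2
      ≤ 2 * τ / (1 - τ ^ 2) * ‖mva D⁻¹ grad‖ ^ 2 := by
    have heq : τ / (1 - τ) * ‖mva D⁻¹ grad‖ ^ 2 + τ / (1 + τ) * ‖mva D⁻¹ grad‖ ^ 2
        = 2 * τ / (1 - τ ^ 2) * ‖mva D⁻¹ grad‖ ^ 2 := by
      rw [hnq]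
      field_simp
      ring
    linarith [part5, part6, heq]
  exact ⟨part1, hDp2, part3, part4, part5, part6, part7⟩
end

section
/- Sub-Gaussianity of the score in generalized linear models (Lemma LED0EDGLM): Let ε₁,…,ε_n be independent real random variables with E εᵢ = 0, and suppose there are constants ν ≥ 1, g > 0 and, for each i, a constant sᵢ > 0 such that for all |λ| ≤ g, log E exp( λ εᵢ / sᵢ ) ≤ ν²λ²/2. Let Ψ₁,…,Ψ_n ∈ ℝ^p be such that V² := Σᵢ sᵢ² ΨᵢΨᵢᵀ is positive definite, and define N by N^{-1/2} := max_i sup_{γ≠0} sᵢ |Ψᵢᵀγ| / ‖Vγ‖. Then for every nonzero γ ∈ ℝ^p and every |λ| ≤ g N^{1/2}, log E exp( λ γᵀ(Σᵢ Ψᵢ εᵢ) / ‖Vγ‖ ) ≤ ν²λ²/2. -/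
open MeasureTheory Matrix ProbabilityTheory
open scoped RealInnerProductSpace

lemma vecMulVec_mulVec' {p : ℕ} (u v x : Fin p → ℝ) :
    Matrix.vecMulVec u v *ᵥ x = (v ⬝ᵥ x) • u := by
  ext i
  simp [Matrix.mulVec, Matrix.vecMulVec, dotProduct, Finset.sum_mul, Finset.mul_sum]
  exact Finset.sum_congr rfl fun j _ => by ring

lemma inner_eq_dot {p : ℕ} (x y : EuclideanSpace ℝ (Fin p)) :
    ⟪x, y⟫ = (x : Fin p → ℝ) ⬝ᵥ (y : Fin p → ℝ) := by
  simp [PiLp.inner_apply, dotProduct, mul_comm]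

lemma key_identity {p n : ℕ} (s : Fin n → ℝ) (Ψ : Fin n → EuclideanSpace ℝ (Fin p))
    (V : Matrix (Fin p) (Fin p) ℝ) (hV : V.PosDef)
    (hV2 : V * V = ∑ i, s i ^ 2 • Matrix.vecMulVec (Ψ i) (Ψ i))
    (γ : EuclideanSpace ℝ (Fin p)) :
    ‖mva V γ‖ ^ 2 = ∑ i, s i ^ 2 * ⟪Ψ i, γ⟫ ^ 2 := by
  have hsym : (Matrix.toEuclideanLin V).IsSymmetric :=
    Matrix.isHermitian_iff_isSymmetric.mp hV.1
  have h1 : ‖mva V γ‖ ^ 2 = ⟪γ, mva (V * V) γ⟫ := by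
    rw [← real_inner_self_eq_norm_sq]
    have := hsym γ (mva V γ)
    rw [show (⟪mva V γ, mva V γ⟫ : ℝ) = ⟪Matrix.toEuclideanLin V γ, mva V γ⟫ from rfl, this]
    congr 1
    simp only [mva, Matrix.toEuclideanLin_apply, Matrix.mulVec_mulVec]
  rw [h1, hV2]
  simp only [mva, map_sum, LinearMap.sum_apply, inner_sum]
  refine Finset.sum_congr rfl fun i _ => ?_
  rw [Matrix.toEuclideanLin_apply, Matrix.smul_mulVec, vecMulVec_mulVec' (Ψ i) (Ψ i)]
  rw [WithLp.toLp_smul, WithLp.toLp_smul, inner_smul_right, inner_smul_right]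
  rw [WithLp.toLp_ofLp]
  rw [show ((Ψ i : Fin p → ℝ) ⬝ᵥ (γ : Fin p → ℝ)) = ⟪Ψ i, γ⟫ from
    (inner_eq_dot (Ψ i) γ).symm]
  rw [real_inner_comm γ (Ψ i)]
  ring


set_option maxHeartbeats 2000000

/-- **Sub-Gaussianity of the score in generalized linear models** (Lemma `LED0EDGLM`):
with independent centered errors `εᵢ` having scaled sub-Gaussian marginals,
`V² = Σᵢ sᵢ²ΨᵢΨᵢᵀ` and `N⁻¹ᐟ² = maxᵢ sup_γ sᵢ|Ψᵢᵀγ|/‖Vγ‖`, the score `Σᵢ Ψᵢεᵢ`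
is `V`-sub-Gaussian for `|λ| ≤ g N¹ᐟ²`. -/
theorem glm_score_subgaussian
    {p n : ℕ}
    {Ω : Type*} [MeasurableSpace Ω] (P : Measure Ω) [IsProbabilityMeasure P]
    (ε : Fin n → Ω → ℝ)
    (hmeas : ∀ i, Measurable (ε i))
    (hint : ∀ i, Integrable (ε i) P)
    (hindep : iIndepFun ε P)
    (hcentered : ∀ i, ∫ w, ε i w ∂P = 0)
    (ν g : ℝ) (hν : 1 ≤ ν) (hg : 0 < g)
    (s : Fin n → ℝ) (hs : ∀ i, 0 < s i)
    -- marginal sub-Gaussianity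
    (hsubG : ∀ i, ∀ lam : ℝ, |lam| ≤ g →
      Real.log (∫ w, Real.exp (lam * ε i w / s i) ∂P) ≤ ν ^ 2 * lam ^ 2 / 2)
    (Ψ : Fin n → EuclideanSpace ℝ (Fin p))
    -- V is the symmetric positive definite square root of V² = Σᵢ sᵢ² ΨᵢΨᵢᵀ
    (V : Matrix (Fin p) (Fin p) ℝ) (hV : V.PosDef)
    (hV2 : V * V = ∑ i, s i ^ 2 • Matrix.vecMulVec (Ψ i) (Ψ i))
    -- N is defined by N⁻¹ᐟ² = maxᵢ sup_{γ ≠ 0} sᵢ|Ψᵢᵀγ|/‖Vγ‖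
    (N : ℝ) (hN : 0 < N)
    (hNdef : IsLUB {x : ℝ | ∃ i : Fin n, ∃ γ : EuclideanSpace ℝ (Fin p),
        γ ≠ 0 ∧ x = s i * |⟪Ψ i, γ⟫| / ‖mva V γ‖} (Real.sqrt N)⁻¹) :
    ∀ γ : EuclideanSpace ℝ (Fin p), γ ≠ 0 → ∀ lam : ℝ, |lam| ≤ g * Real.sqrt N →
      Real.log (∫ w, Real.exp (lam * ⟪γ, ∑ i, ε i w • Ψ i⟫ / ‖mva V γ‖) ∂P)
        ≤ ν ^ 2 * lam ^ 2 / 2 := by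
  intro γ hγ lam hlam
  have hRHS : 0 ≤ ν ^ 2 * lam ^ 2 / 2 := by positivity
  -- positivity of the norm
  have hDpos : 0 < ‖mva V γ‖ := by
    rw [norm_pos_iff]
    intro h
    have h2 : V *ᵥ (γ : Fin p → ℝ) = 0 := by
      have := congrArg (WithLp.equiv 2 (Fin p → ℝ)) h
      simpa [mva, Matrix.toEuclideanLin_apply] using this
    have hγ' : (γ : Fin p → ℝ) ≠ 0 := fun hc => hγ (WithLp.ofLp_injective 2 hc)
    have := hV.dotProduct_mulVec_pos hγ'
    rw [h2] at this
    simp at this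
  set D := ‖mva V γ‖ with hDdef
  set a : Fin n → ℝ := fun i => ⟪Ψ i, γ⟫ with ha
  set c : Fin n → ℝ := fun i => lam * s i * a i / D with hc
  have hsqrtN : 0 < Real.sqrt N := Real.sqrt_pos.mpr hN
  have hkey : D ^ 2 = ∑ i, s i ^ 2 * a i ^ 2 := key_identity s Ψ V hV hV2 γ
  have hbound : ∀ i, |c i| ≤ g := by
    intro i
    have hub : s i * |a i| / D ≤ (Real.sqrt N)⁻¹ := hNdef.1 ⟨i, γ, hγ, rfl⟩
    have hceq : |c i| = |lam| * (s i * |a i| / D) := by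
      rw [hc, abs_div, abs_mul, abs_mul, abs_of_pos (hs i), abs_of_pos hDpos]
      ring
    rw [hceq]
    calc |lam| * (s i * |a i| / D) ≤ (g * Real.sqrt N) * (Real.sqrt N)⁻¹ :=
          mul_le_mul hlam hub
            (div_nonneg (mul_nonneg (hs i).le (abs_nonneg _)) hDpos.le)
            (mul_nonneg hg.le hsqrtN.le)
      _ = g := by field_simp
  have hsumsq : ∑ i, c i ^ 2 = lam ^ 2 := by
    have h2 : ∀ i : Fin n, c i ^ 2 = lam ^ 2 * (s i ^ 2 * a i ^ 2) / D ^ 2 := by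
      intro i; rw [hc]; ring
    rw [Finset.sum_congr rfl fun i _ => h2 i, ← Finset.sum_div, ← Finset.mul_sum, ← hkey]
    field_simp
  -- transformed variables
  set X : Fin n → Ω → ℝ := fun i w => (c i / s i) * ε i w with hX
  have hXindep : iIndepFun X P := by
    have := hindep.comp (fun i (x : ℝ) => (c i / s i) * x)
      (fun i => measurable_id.const_mul _)
    exact this
  have hXmeas : ∀ i, Measurable (X i) := fun i => (hmeas i).const_mul _
  have hmgf := hXindep.mgf_sum (t := 1) hXmeas Finset.univ
  have hpt : ∀ w, Real.exp (lam * ⟪γ, ∑ i, ε i w • Ψ i⟫ / D)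
      = Real.exp (1 * (∑ i, X i) w) := by
    intro w
    congr 1
    have hin : ⟪γ, ∑ i, ε i w • Ψ i⟫ = ∑ i, ε i w * a i := by
      rw [inner_sum]
      exact Finset.sum_congr rfl fun i _ => by
        rw [real_inner_smul_right, real_inner_comm]
    rw [hin, one_mul, Finset.sum_apply, Finset.mul_sum, Finset.sum_div]
    refine Finset.sum_congr rfl fun i _ => ?_
    simp only [hX, hc]
    have hsi := (hs i).ne'
    field_simp [hsi, hDpos.ne']
  have hLHS : (∫ w, Real.exp (lam * ⟪γ, ∑ i, ε i w • Ψ i⟫ / D) ∂P)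
      = mgf (∑ i, X i) P 1 := by
    rw [mgf]
    exact integral_congr_ae (Filter.Eventually.of_forall hpt)
  rw [hLHS, hmgf]
  by_cases hz : ∃ j : Fin n, mgf (X j) P 1 = 0
  · obtain ⟨j, hj⟩ := hz
    rw [Finset.prod_eq_zero (Finset.mem_univ j) hj, Real.log_zero]
    exact hRHS
  · push_neg at hz
    rw [Real.log_prod fun j _ => hz j]
    have hterm : ∀ i : Fin n, Real.log (mgf (X i) P 1) ≤ ν ^ 2 * c i ^ 2 / 2 := by
      intro i
      have hpt2 : ∀ w, Real.exp (1 * X i w) = Real.exp (c i * ε i w / s i) := by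
        intro w
        congr 1
        simp only [hX]
        have hsi := (hs i).ne'
        field_simp
      have hmi : mgf (X i) P 1 = ∫ w, Real.exp (c i * ε i w / s i) ∂P := by
        rw [mgf]
        exact integral_congr_ae (Filter.Eventually.of_forall hpt2)
      rw [hmi]
      exact hsubG i (c i) (hbound i)
    calc ∑ i, Real.log (mgf (X i) P 1) ≤ ∑ i, ν ^ 2 * c i ^ 2 / 2 :=
          Finset.sum_le_sum fun i _ => hterm i
      _ = ν ^ 2 * lam ^ 2 / 2 := by
          rw [← Finset.sum_div, ← Finset.mul_sum, hsumsq]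
end

section
/- Hessian of the expected least-absolute-deviation contrast (Lemma Lidentmed): Let Y₁,…,Y_n be independent real random variables and Ψ₁,…,Ψ_n ∈ ℝ^p. Fix θ* ∈ ℝ^p and suppose each residual Yᵢ − Ψᵢᵀθ* has a bounded continuous density pᵢ on ℝ. Define M(θ) := −(1/2) Σᵢ E|Yᵢ − Ψᵢᵀθ| and assume θ* is a stationary point of M, i.e. Σᵢ ( P(Yᵢ ≤ Ψᵢᵀθ*) − 1/2 ) Ψᵢ = 0. Then: (i) M is twice differentiable with −∇²M(θ) = Σᵢ pᵢ( Ψᵢᵀ(θ−θ*) ) ΨᵢΨᵢᵀ for every θ; (ii) for every θ there exists θ° on the segment [θ*, θ] such that M(θ*) − M(θ) = (1/2) Σᵢ |Ψᵢᵀ(θ−θ*)|² pᵢ( Ψᵢᵀ(θ°−θ*) ). -/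
open MeasureTheory Matrix ProbabilityTheory
open scoped RealInnerProductSpace

private lemma aux_Iic_deriv (f : ℝ → ℝ) (hc : Continuous f)
    (hInt : ∀ t, IntegrableOn f (Set.Iic t)) (x₀ : ℝ) :
    HasDerivAt (fun u => ∫ v in Set.Iic u, f v) (f x₀) x₀ := by
  have key : ∀ u, ∫ v in Set.Iic u, f v = (∫ v in Set.Iic x₀, f v) + ∫ v in x₀..u, f v := by
    intro u
    rw [← intervalIntegral.integral_Iic_sub_Iic (hInt x₀) (hInt u)]
    ring
  have h2 : HasDerivAt (fun u => (∫ v in Set.Iic x₀, f v) + ∫ v in x₀..u, f v) (f x₀) x₀ :=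
    (intervalIntegral.integral_hasDerivAt_right (hc.intervalIntegrable _ _)
      hc.stronglyMeasurable.stronglyMeasurableAtFilter hc.continuousAt).const_add _
  exact h2.congr_of_eventuallyEq (Filter.Eventually.of_forall key)

private lemma aux_atom {Ω : Type*} [MeasurableSpace Ω] (P : Measure Ω) [IsProbabilityMeasure P]
    (Y : Ω → ℝ) (hm : Measurable Y) (F : ℝ → ℝ) (hFcont : Continuous F)
    (hF0 : ∀ t, 0 ≤ F t)
    (hF : ∀ t, P {w | Y w ≤ t} = ENNReal.ofReal (F t)) (s : ℝ) :
    P {w | Y w = s} = 0 := by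
  have key : ∀ ε > (0:ℝ), P {w | Y w = s} ≤ ENNReal.ofReal (F s - F (s - ε)) := by
    intro ε hε
    have hsub : {w | Y w ≤ s - ε} ⊆ {w | Y w ≤ s} := fun w hw => by
      simp only [Set.mem_setOf_eq] at hw ⊢; linarith
    have hd : P ({w | Y w ≤ s} \ {w | Y w ≤ s - ε}) = P {w | Y w ≤ s} - P {w | Y w ≤ s - ε} :=
      measure_diff hsub (hm measurableSet_Iic).nullMeasurableSet (measure_ne_top _ _)
    have hmem : {w | Y w = s} ⊆ {w | Y w ≤ s} \ {w | Y w ≤ s - ε} := by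
      intro w hw
      simp only [Set.mem_setOf_eq] at hw
      constructor
      · exact le_of_eq hw
      · simp only [Set.mem_setOf_eq]; push_neg; linarith [hw.ge]
    calc P {w | Y w = s} ≤ P ({w | Y w ≤ s} \ {w | Y w ≤ s - ε}) := measure_mono hmem
      _ = P {w | Y w ≤ s} - P {w | Y w ≤ s - ε} := hd
      _ = ENNReal.ofReal (F s) - ENNReal.ofReal (F (s - ε)) := by rw [hF, hF]
      _ ≤ ENNReal.ofReal (F s - F (s - ε)) := by
          rw [ENNReal.ofReal_sub _ (hF0 _)]
  have hten : Filter.Tendsto (fun ε : ℝ => ENNReal.ofReal (F s - F (s - ε)))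
      (nhdsWithin 0 (Set.Ioi 0)) (nhds 0) := by
    have h1 : Filter.Tendsto (fun ε : ℝ => F s - F (s - ε)) (nhds 0) (nhds 0) := by
      have hc : Continuous (fun ε : ℝ => F s - F (s - ε)) :=
        continuous_const.sub (hFcont.comp (continuous_const.sub continuous_id))
      have := hc.tendsto (0:ℝ)
      simpa using this
    have h2 : Filter.Tendsto (fun ε : ℝ => F s - F (s - ε)) (nhdsWithin 0 (Set.Ioi 0)) (nhds 0) :=
      h1.mono_left nhdsWithin_le_nhds
    have := (ENNReal.continuous_ofReal.tendsto 0).comp h2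
    simpa [Function.comp_def] using this
  have := ge_of_tendsto hten (eventually_nhdsWithin_of_forall
    (fun ε (hε : ε ∈ Set.Ioi (0:ℝ)) => key ε hε))
  exact le_antisymm this zero_le

private lemma aux_abs_deriv {Ω : Type*} [MeasurableSpace Ω] (P : Measure Ω)
    [IsProbabilityMeasure P]
    (Y : Ω → ℝ) (hm : Measurable Y) (hi : Integrable Y P) (s : ℝ)
    (hatom : P {w | Y w = s} = 0) :
    HasDerivAt (fun t => ∫ w, |Y w - t| ∂P)
      (2 * (P {w | Y w ≤ s}).toReal - 1) s := by
  have hset : MeasurableSet {w | Y w ≤ s} := hm measurableSet_Iic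
  have key := hasDerivAt_integral_of_dominated_loc_of_lip
    (F := fun (x : ℝ) w => |Y w - x|)
    (F' := fun w => if Y w ≤ s then (1:ℝ) else -1)
    (bound := fun _ => (1:ℝ)) (μ := P) (x₀ := s) (Metric.ball_mem_nhds s one_pos)
    (Filter.Eventually.of_forall fun x =>
      ((hm.sub measurable_const).abs).aestronglyMeasurable)
    ((hi.sub (integrable_const s)).abs)
    ((Measurable.ite hset measurable_const measurable_const).aestronglyMeasurable)
    (Filter.Eventually.of_forall fun w => by
      have : LipschitzWith 1 (fun x : ℝ => |Y w - x|) := by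
        refine LipschitzWith.of_dist_le_mul fun x y => ?_
        rw [Real.dist_eq, Real.dist_eq]
        push_cast
        rw [one_mul]
        have h1 := abs_abs_sub_abs_le_abs_sub (Y w - x) (Y w - y)
        have h2 : |Y w - x - (Y w - y)| = |x - y| := by
          rw [show Y w - x - (Y w - y) = -(x-y) by ring, abs_neg]
        exact h2 ▸ h1
      have : LipschitzOnWith 1 (fun x : ℝ => |Y w - x|) (Metric.ball s 1) :=
        this.lipschitzOnWith
      convert this using 2
      simp)
    (integrable_const 1)
    (by
      have hne : ∀ᵐ w ∂P, Y w ≠ s := by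
        rw [ae_iff]
        convert hatom using 2
        simp
      filter_upwards [hne] with w hw
      rcases lt_or_gt_of_ne hw with h | h
      · rw [if_pos h.le]
        have h2 : HasDerivAt (fun x : ℝ => x - Y w) 1 s := (hasDerivAt_id s).sub_const _
        apply h2.congr_of_eventuallyEq
        filter_upwards [eventually_gt_nhds h] with x hx
        rw [abs_of_nonpos (by linarith)]; ring
      · rw [if_neg (not_le.mpr h)]
        have h2 : HasDerivAt (fun x : ℝ => Y w - x) (-1) s := by
          simpa using (hasDerivAt_id s).const_sub (Y w)
        apply h2.congr_of_eventuallyEq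
        filter_upwards [eventually_lt_nhds h] with x hx
        rw [abs_of_nonneg (by linarith)])
  obtain ⟨-, hD⟩ := key
  refine hD.congr_deriv (Eq.symm ?_)
  have heq : ∀ w, (if Y w ≤ s then (1:ℝ) else -1)
      = Set.indicator {w | Y w ≤ s} (fun _ => (2:ℝ)) w - 1 := by
    intro w
    by_cases h : Y w ≤ s <;> simp [h, Set.indicator_apply] <;> norm_num
  rw [show (fun w => if Y w ≤ s then (1:ℝ) else -1) = fun w =>
      Set.indicator {w | Y w ≤ s} (fun _ => (2:ℝ)) w - 1 from funext heq]
  rw [integral_sub ((integrable_const (2:ℝ)).indicator hset) (integrable_const 1)]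
  rw [integral_indicator_const _ hset]
  simp [mul_comm]
  rfl

private lemma euclid_sum_apply {p m : ℕ} (f : Fin m → EuclideanSpace ℝ (Fin p)) (j : Fin p) :
    (∑ i, f i) j = ∑ i, f i j := by
  have : (∑ i, f i) j = EuclideanSpace.proj j (∑ i, f i) := rfl
  rw [this, map_sum]
  rfl

/-- **Hessian of the expected least-absolute-deviation contrast** (Lemma `Lidentmed`):
`M(θ) = -(1/2)Σᵢ E|Yᵢ - Ψᵢᵀθ|` is twice differentiable with
`-∇²M(θ) = Σᵢ pᵢ(Ψᵢᵀ(θ-θ*))ΨᵢΨᵢᵀ`, and `M(θ*) - M(θ)` has a second-order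
representation at an intermediate point of the segment `[θ*, θ]`. -/
theorem lad_expected_contrast_hessian
    {p n : ℕ}
    {Ω : Type*} [MeasurableSpace Ω] (P : Measure Ω) [IsProbabilityMeasure P]
    (Y : Fin n → Ω → ℝ)
    (hmeas : ∀ i, Measurable (Y i))
    (hint : ∀ i, Integrable (Y i) P)
    (hindep : iIndepFun Y P)
    (Ψ : Fin n → EuclideanSpace ℝ (Fin p))
    (θstar : EuclideanSpace ℝ (Fin p))
    -- each residual Yᵢ - Ψᵢᵀθ* has a bounded continuous density pᵢ
    (pdf : Fin n → ℝ → ℝ)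
    (hpdfcont : ∀ i, Continuous (pdf i))
    (hpdfbdd : ∀ i, ∃ C : ℝ, ∀ u : ℝ, pdf i u ≤ C)
    (hpdfnonneg : ∀ i u, 0 ≤ pdf i u)
    (hpdf : ∀ i, ∀ t : ℝ,
      P {w | Y i w - ⟪Ψ i, θstar⟫ ≤ t} = ENNReal.ofReal (∫ u in Set.Iic t, pdf i u))
    -- θ* is a stationary point of M(θ) := -(1/2)Σᵢ E|Yᵢ - Ψᵢᵀθ|
    (hstat : ∑ i, ((P {w | Y i w ≤ ⟪Ψ i, θstar⟫}).toReal - 1 / 2) • Ψ i = 0) :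
    -- (i) M is twice differentiable with -∇²M(θ) = Σᵢ pᵢ(Ψᵢᵀ(θ-θ*))ΨᵢΨᵢᵀ
    (∃ G : EuclideanSpace ℝ (Fin p) → EuclideanSpace ℝ (Fin p),
      (∀ θ, HasGradientAt (fun t : EuclideanSpace ℝ (Fin p) =>
          -(1 / 2) * ∑ i, ∫ w, |Y i w - ⟪Ψ i, t⟫| ∂P) (G θ) θ)
      ∧ ∀ θ, HasFDerivAt G
          (LinearMap.toContinuousLinearMap (Matrix.toEuclideanLin
            (-(∑ i, pdf i ⟪Ψ i, θ - θstar⟫ • Matrix.vecMulVec (Ψ i) (Ψ i))))) θ)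
    -- (ii) second-order representation of M(θ*) - M(θ)
    ∧ ∀ θ : EuclideanSpace ℝ (Fin p), ∃ θc ∈ segment ℝ θstar θ,
        (-(1 / 2) * ∑ i, ∫ w, |Y i w - ⟪Ψ i, θstar⟫| ∂P)
            - (-(1 / 2) * ∑ i, ∫ w, |Y i w - ⟪Ψ i, θ⟫| ∂P)
          = 1 / 2 * ∑ i, ⟪Ψ i, θ - θstar⟫ ^ 2 * pdf i ⟪Ψ i, θc - θstar⟫ := by
  classical
  -- integrability of densities on half-lines
  have hIntOn : ∀ i (t : ℝ), IntegrableOn (pdf i) (Set.Iic t) := by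
    intro i t
    have hpos : ∃ k : ℕ, P {w | Y i w - ⟪Ψ i, θstar⟫ ≤ (k:ℝ)} ≠ 0 := by
      by_contra h
      push_neg at h
      have huniv : ⋃ k : ℕ, {w | Y i w - ⟪Ψ i, θstar⟫ ≤ (k:ℝ)} = Set.univ := by
        ext w
        simp only [Set.mem_iUnion, Set.mem_setOf_eq, Set.mem_univ, iff_true]
        exact exists_nat_ge _
      have h0 := measure_iUnion_null (μ := P) h
      rw [huniv] at h0
      simp at h0
    obtain ⟨k, hk⟩ := hpos
    have hintT : IntegrableOn (pdf i) (Set.Iic (max t (k:ℝ))) := by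
      by_contra hni
      have h0 : ∫ u in Set.Iic (max t (k:ℝ)), pdf i u = 0 := integral_undef hni
      have h1 := hpdf i (max t (k:ℝ))
      rw [h0] at h1
      simp only [ENNReal.ofReal_zero] at h1
      exact hk (measure_mono_null
        (fun w hw => le_trans hw (le_max_right t (k:ℝ))) h1)
    exact hintT.mono_set (Set.Iic_subset_Iic.mpr (le_max_left _ _))
  -- the distribution functions
  set Fi : Fin n → ℝ → ℝ := fun i s => ∫ u in Set.Iic (s - ⟪Ψ i, θstar⟫), pdf i u with hFidef
  have hFi_nonneg : ∀ i s, 0 ≤ Fi i s :=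
    fun i s => integral_nonneg (fun u => hpdfnonneg i u)
  have hP_eq : ∀ i (s : ℝ), P {w | Y i w ≤ s} = ENNReal.ofReal (Fi i s) := by
    intro i s
    have hseteq : {w | Y i w ≤ s} = {w | Y i w - ⟪Ψ i, θstar⟫ ≤ s - ⟪Ψ i, θstar⟫} := by
      ext w; simp only [Set.mem_setOf_eq]; constructor <;> intro <;> linarith
    rw [hseteq, hpdf i (s - ⟪Ψ i, θstar⟫)]
  have hP_toReal : ∀ i (s : ℝ), (P {w | Y i w ≤ s}).toReal = Fi i s := by
    intro i s
    rw [hP_eq, ENNReal.toReal_ofReal (hFi_nonneg i s)]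
  have hFiDeriv : ∀ i (s : ℝ), HasDerivAt (Fi i) (pdf i (s - ⟪Ψ i, θstar⟫)) s := by
    intro i s
    have h1 := (aux_Iic_deriv (pdf i) (hpdfcont i) (hIntOn i)
      (s - ⟪Ψ i, θstar⟫)).comp s ((hasDerivAt_id s).sub_const ⟪Ψ i, θstar⟫)
    rw [mul_one] at h1
    exact h1
  have hFiCont : ∀ i, Continuous (Fi i) := fun i =>
    continuous_iff_continuousAt.mpr fun s => (hFiDeriv i s).continuousAt
  have hatom : ∀ i (s : ℝ), P {w | Y i w = s} = 0 := fun i s =>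
    aux_atom P (Y i) (hmeas i) (Fi i) (hFiCont i) (hFi_nonneg i) (hP_eq i) s
  have hgDeriv : ∀ i (s : ℝ),
      HasDerivAt (fun t => ∫ w, |Y i w - t| ∂P) (2 * Fi i s - 1) s := by
    intro i s
    have := aux_abs_deriv P (Y i) (hmeas i) (hint i) s (hatom i s)
    rwa [hP_toReal] at this
  -- the gradient map
  set G : EuclideanSpace ℝ (Fin p) → EuclideanSpace ℝ (Fin p) :=
    fun θ => ∑ i, (1/2 - Fi i ⟪Ψ i, θ⟫) • Ψ i with hGdef
  have hMgrad : ∀ θ : EuclideanSpace ℝ (Fin p), HasGradientAt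
      (fun t : EuclideanSpace ℝ (Fin p) => -(1 / 2) * ∑ i, ∫ w, |Y i w - ⟪Ψ i, t⟫| ∂P)
      (G θ) θ := by
    intro θ
    have hterm : ∀ i : Fin n, HasFDerivAt
        (fun t : EuclideanSpace ℝ (Fin p) => ∫ w, |Y i w - ⟪Ψ i, t⟫| ∂P)
        ((2 * Fi i ⟪Ψ i, θ⟫ - 1) • (innerSL ℝ (Ψ i))) θ :=
      fun i => (hgDeriv i ⟪Ψ i, θ⟫).comp_hasFDerivAt θ (innerSL ℝ (Ψ i)).hasFDerivAt
    have hsum : HasFDerivAt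
        (fun t : EuclideanSpace ℝ (Fin p) => ∑ i, ∫ w, |Y i w - ⟪Ψ i, t⟫| ∂P)
        (∑ i, (2 * Fi i ⟪Ψ i, θ⟫ - 1) • (innerSL ℝ (Ψ i))) θ :=
      HasFDerivAt.fun_sum (fun i _ => hterm i)
    have hM := hsum.const_mul (-(1/2 : ℝ))
    rw [hasGradientAt_iff_hasFDerivAt]
    refine hM.congr_fderiv (Eq.symm ?_)
    refine ContinuousLinearMap.ext fun x => ?_
    simp only [InnerProductSpace.toDual_apply_apply, hGdef, sum_inner, real_inner_smul_left,
      ContinuousLinearMap.coe_smul', Pi.smul_apply, ContinuousLinearMap.coe_sum',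
      Finset.sum_apply, innerSL_apply_apply, smul_eq_mul]
    rw [Finset.mul_sum]
    apply Finset.sum_congr rfl
    intro i _
    ring
  have hHess : ∀ θ : EuclideanSpace ℝ (Fin p), HasFDerivAt G
      (LinearMap.toContinuousLinearMap (Matrix.toEuclideanLin
        (-(∑ i, pdf i ⟪Ψ i, θ - θstar⟫ • Matrix.vecMulVec (Ψ i) (Ψ i))))) θ := by
    intro θ
    have hterm : ∀ i : Fin n, HasFDerivAt
        (fun t : EuclideanSpace ℝ (Fin p) => (1/2 - Fi i ⟪Ψ i, t⟫) • Ψ i)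
        ((-((pdf i (⟪Ψ i, θ⟫ - ⟪Ψ i, θstar⟫)) • (innerSL ℝ (Ψ i)))).smulRight (Ψ i)) θ := by
      intro i
      have h1 : HasFDerivAt (fun t : EuclideanSpace ℝ (Fin p) => Fi i ⟪Ψ i, t⟫)
          ((pdf i (⟪Ψ i, θ⟫ - ⟪Ψ i, θstar⟫)) • (innerSL ℝ (Ψ i))) θ :=
        (hFiDeriv i ⟪Ψ i, θ⟫).comp_hasFDerivAt θ (innerSL ℝ (Ψ i)).hasFDerivAt
      exact (h1.const_sub (1/2 : ℝ)).smul_const (Ψ i)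
    have hGsum : HasFDerivAt G (∑ i, (-((pdf i (⟪Ψ i, θ⟫ - ⟪Ψ i, θstar⟫)) •
        (innerSL ℝ (Ψ i)))).smulRight (Ψ i)) θ :=
      HasFDerivAt.fun_sum (fun i (_ : i ∈ Finset.univ) => hterm i)
    refine hGsum.congr_fderiv (Eq.symm ?_)
    refine ContinuousLinearMap.ext fun x => ?_
    have hip : ∀ i : Fin n, ⟪Ψ i, θ - θstar⟫ = ⟪Ψ i, θ⟫ - ⟪Ψ i, θstar⟫ :=
      fun i => inner_sub_right _ _ _
    ext j
    simp only [LinearMap.coe_toContinuousLinearMap', Matrix.toEuclideanLin_apply, hip,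
      ContinuousLinearMap.coe_sum', Finset.sum_apply, ContinuousLinearMap.smulRight_apply,
      ContinuousLinearMap.coe_smul', Pi.smul_apply, innerSL_apply_apply, ContinuousLinearMap.neg_apply,
      smul_eq_mul]
    simp only [PiLp.toLp_apply, Matrix.neg_mulVec_neg, Matrix.neg_apply,
      Matrix.mulVec, dotProduct, Matrix.neg_mulVec, Pi.neg_apply, Finset.sum_apply,
      Matrix.sum_apply, Matrix.smul_apply, Matrix.vecMulVec_apply, smul_eq_mul,
      Pi.smul_apply,
      PiLp.inner_apply, RCLike.inner_apply, conj_trivial, neg_mul, Finset.sum_neg_distrib,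
      euclid_sum_apply, PiLp.smul_apply]
    simp only [Finset.sum_mul, Finset.mul_sum, mul_neg, neg_mul, ← Finset.sum_neg_distrib]
    rw [Finset.sum_comm]
    refine Finset.sum_congr rfl fun i _ => Finset.sum_congr rfl fun k _ => ?_
    ring
  refine ⟨⟨G, hMgrad, hHess⟩, ?_⟩
  intro θ
  set d : Fin n → ℝ := fun i => ⟪Ψ i, θ - θstar⟫ with hddef
  have hdi : ∀ i, d i = ⟪Ψ i, θ⟫ - ⟪Ψ i, θstar⟫ := fun i => inner_sub_right _ _ _
  set φ : ℝ → ℝ :=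
    fun t => -(1/2 : ℝ) * ∑ i, ∫ w, |Y i w - (⟪Ψ i, θstar⟫ + t * d i)| ∂P with hφdef
  set φ' : ℝ → ℝ := fun t =>
    -(1/2 : ℝ) * ∑ i, (2 * Fi i (⟪Ψ i, θstar⟫ + t * d i) - 1) * d i with hφ'def
  set φ'' : ℝ → ℝ := fun t =>
    -(1/2 : ℝ) * ∑ i, 2 * pdf i (t * d i) * d i * d i with hφ''def
  have haff : ∀ i (t : ℝ), HasDerivAt (fun t : ℝ => ⟪Ψ i, θstar⟫ + t * d i) (d i) t := by
    intro i t
    simpa using ((hasDerivAt_id t).mul_const (d i)).const_add (⟪Ψ i, θstar⟫)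
  have hφd : ∀ t, HasDerivAt φ (φ' t) t := by
    intro t
    apply HasDerivAt.const_mul
    apply HasDerivAt.fun_sum
    intro i _
    exact (hgDeriv i _).comp t (haff i t)
  have hφ'd : ∀ t, HasDerivAt φ' (φ'' t) t := by
    intro t
    apply HasDerivAt.const_mul
    apply HasDerivAt.fun_sum
    intro i _
    have h1 := (((hFiDeriv i (⟪Ψ i, θstar⟫ + t * d i)).comp t (haff i t)).const_mul
      (2:ℝ)).sub_const (1:ℝ)
    have h2 := h1.mul_const (d i)
    have h3 : (⟪Ψ i, θstar⟫ + t * d i - ⟪Ψ i, θstar⟫) = t * d i := by ring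
    rw [h3] at h2
    refine h2.congr_deriv (Eq.symm ?_)
    ring
  have hφ'0 : φ' 0 = 0 := by
    have h := congrArg (fun v : EuclideanSpace ℝ (Fin p) => ⟪v, θ - θstar⟫) hstat
    simp only [sum_inner, real_inner_smul_left, inner_zero_left] at h
    simp only [hφ'def, zero_mul, add_zero]
    have h2 : ∑ i, (2 * Fi i ⟪Ψ i, θstar⟫ - 1) * d i = 0 := by
      calc ∑ i, (2 * Fi i ⟪Ψ i, θstar⟫ - 1) * d i
          = 2 * ∑ i, ((P {w | Y i w ≤ ⟪Ψ i, θstar⟫}).toReal - 1/2) * ⟪Ψ i, θ - θstar⟫ := by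
            rw [Finset.mul_sum]
            refine Finset.sum_congr rfl fun i _ => ?_
            rw [hP_toReal i ⟪Ψ i, θstar⟫]
            simp only [hddef]
            ring
        _ = 0 := by rw [h]; ring
    rw [h2, mul_zero]
  set K : ℝ := φ 1 - φ 0 with hKdef
  have hψd : ∀ t : ℝ, HasDerivAt (fun t => φ t - φ 0 - t^2 * K) (φ' t - 2*t*K) t := by
    intro t
    have h1 := ((hφd t).sub_const (φ 0)).sub ((hasDerivAt_pow 2 t).mul_const K)
    refine h1.congr_deriv (Eq.symm ?_)
    simp
  have hroll1 : ∃ t₁ ∈ Set.Ioo (0:ℝ) 1, φ' t₁ - 2*t₁*K = 0 := by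
    apply exists_hasDerivAt_eq_zero zero_lt_one
    · exact (continuous_iff_continuousAt.mpr fun x => (hψd x).continuousAt).continuousOn
    · rw [hKdef]; ring
    · exact fun x _ => hψd x
  obtain ⟨t₁, ht₁, hval1⟩ := hroll1
  have hψ'd : ∀ t : ℝ, HasDerivAt (fun t => φ' t - 2*t*K) (φ'' t - 2*K) t := by
    intro t
    have h1 := (hφ'd t).sub (((hasDerivAt_id t).const_mul (2:ℝ)).mul_const K)
    refine h1.congr_deriv (Eq.symm ?_)
    ring
  have hroll2 : ∃ t₀ ∈ Set.Ioo 0 t₁, φ'' t₀ - 2*K = 0 := by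
    apply exists_hasDerivAt_eq_zero ht₁.1
    · exact (continuous_iff_continuousAt.mpr fun x => (hψ'd x).continuousAt).continuousOn
    · have hz : φ' 0 - 2*0*K = 0 := by rw [hφ'0]; ring
      rw [hz, hval1]
    · exact fun x _ => hψ'd x
  obtain ⟨t₀, ht₀, hval2⟩ := hroll2
  have hinner : ∀ i, ⟪Ψ i, θstar + t₀ • (θ - θstar) - θstar⟫ = t₀ * d i := by
    intro i
    rw [show θstar + t₀ • (θ - θstar) - θstar = t₀ • (θ - θstar) by abel,
      real_inner_smul_right]
  refine ⟨θstar + t₀ • (θ - θstar),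
    ⟨1 - t₀, t₀, by linarith [ht₀.1, ht₀.2, ht₁.2], le_of_lt ht₀.1, by ring, by
      rw [sub_smul, smul_sub, one_smul]; abel⟩, ?_⟩
  have hM0 : (-(1/2 : ℝ) * ∑ i, ∫ w, |Y i w - ⟪Ψ i, θstar⟫| ∂P) = φ 0 := by
    simp only [hφdef, zero_mul, add_zero]
  have hM1 : (-(1/2 : ℝ) * ∑ i, ∫ w, |Y i w - ⟪Ψ i, θ⟫| ∂P) = φ 1 := by
    simp only [hφdef]
    refine congrArg _ (Finset.sum_congr rfl fun i _ => ?_)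
    have ha : ⟪Ψ i, θstar⟫ + 1 * d i = ⟪Ψ i, θ⟫ := by rw [hdi i]; ring
    rw [ha]
  have hS : φ'' t₀ = -(∑ i, d i^2 * pdf i (t₀ * d i)) := by
    have hsum2 : ∑ i, 2 * pdf i (t₀ * d i) * d i * d i
        = 2 * ∑ i, d i^2 * pdf i (t₀ * d i) := by
      rw [Finset.mul_sum]
      exact Finset.sum_congr rfl fun i _ => by ring
    simp only [hφ''def]
    rw [hsum2]
    ring
  have hfin : φ 0 - φ 1 = 1/2 * ∑ i, d i^2 * pdf i (t₀ * d i) := by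
    rw [hS] at hval2
    rw [hKdef] at hval2
    linarith
  rw [hM0, hM1]
  refine hfin.trans ?_
  refine congrArg _ (Finset.sum_congr rfl fun i _ => ?_)
  rw [hinner i]
end
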